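/- The least cardinality of a set of reals that does not have the Hurewicz property Ufin(O,Γ) equals the bounding number b; that is, every set of reals of cardinality less than b has the Hurewicz property, and there exists a set of reals of cardinality b without the Hurewicz property. -/

import Mathlib

open Filter Set Cardinal

/-- The Rothberger property `S1(O,O)`: for every sequence of open covers one can select one
member from each so that the selections form a cover. -/
def RothbergerProp (X : Type*) [TopologicalSpace X] : Prop :=
  ∀ U : ℕ → Set (Set X),
    (∀ n, (∀ s ∈ U n, IsOpen s) ∧ ⋃₀ U n = Set.univ) →
    ∃ f : ℕ → Set X, (∀ n, f n ∈ U n) ∧ (⋃ n, f n) = Set.univ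

/-- The Hurewicz property `Ufin(O,Γ)`: for every sequence of open covers one can select finite
subfamilies whose unions form a γ-cover (every point is in all but finitely many of them). -/
def HurewiczProp (X : Type*) [TopologicalSpace X] : Prop :=
  ∀ U : ℕ → Set (Set X),
    (∀ n, (∀ s ∈ U n, IsOpen s) ∧ ⋃₀ U n = Set.univ) →
    ∃ F : ℕ → Set (Set X), (∀ n, F n ⊆ U n ∧ (F n).Finite) ∧
      ∀ x : X, ∀ᶠ n in atTop, x ∈ ⋃₀ F n

/-- The Menger property `Ufin(O,O)`. -/
def MengerProp (X : Type*) [TopologicalSpace X] : Prop :=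
  ∀ U : ℕ → Set (Set X),
    (∀ n, (∀ s ∈ U n, IsOpen s) ∧ ⋃₀ U n = Set.univ) →
    ∃ F : ℕ → Set (Set X), (∀ n, F n ⊆ U n ∧ (F n).Finite) ∧
      (⋃ n, ⋃₀ F n) = Set.univ

/-- The Gerlits–Nagy property `(*)_GN` = Rothberger + Hurewicz
(Kočinac–Scheepers characterization). -/
def GerlitsNagy (X : Type*) [TopologicalSpace X] : Prop :=
  RothbergerProp X ∧ HurewiczProp X

/-- Strong measure zero: for every sequence of positive reals `ε n` there is a cover
`A n` with `diam (A n) < ε n`. -/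
def StrongMeasureZero (X : Type*) [PseudoMetricSpace X] : Prop :=
  ∀ ε : ℕ → ℝ, (∀ n, 0 < ε n) →
    ∃ A : ℕ → Set X, (⋃ n, A n) = Set.univ ∧ ∀ n, EMetric.diam (A n) < ENNReal.ofReal (ε n)

/-- The bounding number `b`: least cardinality of an unbounded family in `(ℕ → ℕ, ≤*)`. -/
noncomputable def boundingNumber : Cardinal :=
  sInf { c : Cardinal | ∃ F : Set (ℕ → ℕ), #F = c ∧
    ∀ g : ℕ → ℕ, ∃ f ∈ F, ¬ ∀ᶠ n in atTop, f n ≤ g n }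

/-- `cov(M)`: least cardinality of a family of meager sets of reals covering `ℝ`. -/
noncomputable def covMeager : Cardinal :=
  sInf { c : Cardinal | ∃ S : Set (Set ℝ), #S = c ∧ (∀ A ∈ S, IsMeagre A) ∧ ⋃₀ S = Set.univ }

/-- `add(M)`: least cardinality of a family of meager sets of reals whose union is not meager. -/
noncomputable def addMeager : Cardinal :=
  sInf { c : Cardinal | ∃ S : Set (Set ℝ), #S = c ∧ (∀ A ∈ S, IsMeagre A) ∧ ¬ IsMeagre (⋃₀ S) }

/-- An ω-cover: `Set.univ ∉ U` and every finite set is contained in some member of `U`. -/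
def IsOmegaCover {X : Type*} (U : Set (Set X)) : Prop :=
  Set.univ ∉ U ∧ ∀ F : Set X, F.Finite → ∃ u ∈ U, F ⊆ u

/-- A γ-cover: an infinite family such that every point belongs to all but finitely many members. -/
def IsGammaCover {X : Type*} (U : Set (Set X)) : Prop :=
  U.Infinite ∧ ∀ x : X, {u ∈ U | x ∉ u}.Finite

/-- A family `U` is groupable (`U ∈ Ω^gp`) if it admits a partition into finite sets such that
every finite `F ⊆ X` is contained in a member of all but finitely many pieces. -/
def IsGroupable {X : Type*} (U : Set (Set X)) : Prop :=
  ∃ P : Set (Set (Set X)),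
    (∀ G ∈ P, G.Finite ∧ G.Nonempty) ∧ P.PairwiseDisjoint id ∧ ⋃₀ P = U ∧
    ∀ F : Set X, F.Finite → {G ∈ P | ¬ ∃ u ∈ G, F ⊆ u}.Finite

/-- The selection property `S1(Ω, Ω^gp)`. -/
def S1OmegaOmegaGp (X : Type*) [TopologicalSpace X] : Prop :=
  ∀ U : ℕ → Set (Set X),
    (∀ n, (∀ s ∈ U n, IsOpen s) ∧ IsOmegaCover (U n)) →
    ∃ f : ℕ → Set X, (∀ n, f n ∈ U n) ∧
      IsOmegaCover (Set.range f) ∧ IsGroupable (Set.range f)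

/-- A γ-set: every open ω-cover contains a γ-subcover. -/
def IsGammaSet (X : Type*) [TopologicalSpace X] : Prop :=
  ∀ U : Set (Set X), (∀ s ∈ U, IsOpen s) → IsOmegaCover U →
    ∃ V ⊆ U, IsGammaCover V


def sfun (f : ℕ → ℕ) : ℕ → ℕ
  | 0 => 0
  | n + 1 => sfun f n + f n + 1

lemma sfun_lt (f : ℕ → ℕ) (n : ℕ) : sfun f n < sfun f (n + 1) := by
  simp [sfun]

lemma sfun_mono (f : ℕ → ℕ) : StrictMono (sfun f) :=
  strictMono_nat_of_lt_succ (sfun_lt f)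

lemma le_sfun (f : ℕ → ℕ) (n : ℕ) : n ≤ sfun f n := by
  induction n with
  | zero => simp [sfun]
  | succ k ih => have := sfun_lt f k; omega

def bseq (f : ℕ → ℕ) (j : ℕ) : Bool := decide (∀ k ≤ j, sfun f k + f k ≠ j)

lemma bseq_eq_false_iff (f : ℕ → ℕ) (j : ℕ) :
    bseq f j = false ↔ ∃ k, sfun f k + f k = j := by
  simp only [bseq, decide_eq_false_iff_not, not_forall]
  constructor
  · rintro ⟨k, _, hk⟩; exact ⟨k, by tauto⟩
  · rintro ⟨k, hk⟩
    exact ⟨k, le_trans (le_trans (le_sfun f k) (Nat.le_add_right _ _)) hk.le, by tauto⟩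

lemma bseq_true_of_mem_block (f : ℕ → ℕ) {n j : ℕ} (h1 : sfun f n ≤ j)
    (h2 : j < sfun f n + f n) : bseq f j = true := by
  rcases Bool.eq_false_or_eq_true (bseq f j) with h | h
  · exact h
  · exfalso
    rcases (bseq_eq_false_iff f j).mp h with ⟨k, hk⟩
    rcases lt_trichotomy k n with hlt | rfl | hgt
    · have : sfun f (k+1) ≤ sfun f n := (sfun_mono f).monotone hlt
      simp [sfun] at this; omega
    · omega
    · have : sfun f (n+1) ≤ sfun f k := (sfun_mono f).monotone hgt
      have := le_sfun f k
      simp [sfun] at *; omega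

lemma bseq_false_at_end (f : ℕ → ℕ) (n : ℕ) : bseq f (sfun f n + f n) = false :=
  (bseq_eq_false_iff f _).mpr ⟨n, rfl⟩

lemma sfun_eq_of_bseq_agree (f g : ℕ → ℕ) (n : ℕ)
    (h : ∀ j < sfun f n, bseq f j = bseq g j) : sfun f n = sfun g n := by
  induction n with
  | zero => simp [sfun]
  | succ m ih =>
    have hm : sfun f m = sfun g m :=
      ih (fun j hj => h j (lt_of_lt_of_le hj ((sfun_mono f).monotone (Nat.le_succ m))))
    have key : f m = g m := by
      rcases lt_trichotomy (f m) (g m) with hfg | hfg | hfg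
      · -- position sfun f m + f m : false for f, true for g
        exfalso
        have hfalse : bseq f (sfun f m + f m) = false := bseq_false_at_end f m
        have htrue : bseq g (sfun f m + f m) = true := by
          apply bseq_true_of_mem_block g (n := m) <;> omega
        have hlt : sfun f m + f m < sfun f (m+1) := by simp [sfun]
        rw [h _ hlt] at hfalse; rw [htrue] at hfalse; exact Bool.noConfusion hfalse
      · exact hfg
      · exfalso
        have hfalse : bseq g (sfun g m + g m) = false := bseq_false_at_end g m
        have htrue : bseq f (sfun g m + g m) = true := by
          apply bseq_true_of_mem_block f (n := m) <;> omega
        have hlt : sfun g m + g m < sfun f (m+1) := by simp [sfun]; omega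
        rw [h _ hlt] at htrue; rw [htrue] at hfalse; exact Bool.noConfusion hfalse
    simp [sfun]; omega


noncomputable def cterm (x : ℕ → Bool) (j : ℕ) : ℝ := (if x j then (2:ℝ) else 0) * (1/3)^(j+1)

lemma cterm_nonneg (x : ℕ → Bool) (j : ℕ) : 0 ≤ cterm x j := by
  unfold cterm; positivity

lemma cterm_le (x : ℕ → Bool) (j : ℕ) : cterm x j ≤ 2 * (1/3)^(j+1) := by
  unfold cterm
  have : (0:ℝ) < (1/3)^(j+1) := by positivity
  split <;> nlinarith

lemma summable_bound : Summable (fun j : ℕ => (2:ℝ) * (1/3)^(j+1)) := by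
  have h : Summable (fun j : ℕ => (1/3:ℝ)^j) := summable_geometric_of_lt_one (by norm_num) (by norm_num)
  have := (h.mul_left ((2:ℝ) * (1/3)))
  refine this.congr (fun j => ?_)
  ring

lemma summable_cterm (x : ℕ → Bool) : Summable (cterm x) :=
  Summable.of_nonneg_of_le (cterm_nonneg x) (cterm_le x) summable_bound

noncomputable def cmap (x : ℕ → Bool) : ℝ := ∑' j, cterm x j

lemma abs_cterm_sub_le (x y : ℕ → Bool) (j : ℕ) : |cterm x j - cterm y j| ≤ 2 * (1/3)^(j+1) := by
  have h1 := cterm_nonneg x j; have h2 := cterm_nonneg y j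
  have h3 := cterm_le x j; have h4 := cterm_le y j
  rw [abs_sub_le_iff]; constructor <;> linarith

lemma cmap_agree (x y : ℕ → Bool) (N : ℕ) (h : |cmap x - cmap y| < (1/3:ℝ)^N) :
    ∀ j < N, x j = y j := by
  by_contra hc
  push_neg at hc
  obtain ⟨jw, hjw, hne⟩ := hc
  have hex : ∃ j, x j ≠ y j := ⟨jw, hne⟩
  set j0 := Nat.find hex with hj0def
  have hj0 : x j0 ≠ y j0 := Nat.find_spec hex
  have hj0N : j0 < N := lt_of_le_of_lt (Nat.find_le hne) hjw
  have hmin : ∀ i < j0, x i = y i := fun i hi => not_not.mp (Nat.find_min hex hi)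
  set d : ℕ → ℝ := fun j => cterm x j - cterm y j with hd
  have hsum : Summable d := (summable_cterm x).sub (summable_cterm y)
  have hsplit : ∑ i ∈ Finset.range (j0+1), d i + ∑' i, d (i + (j0+1)) = ∑' i, d i :=
    Summable.sum_add_tsum_nat_add (j0+1) hsum
  have hfin : ∑ i ∈ Finset.range (j0+1), d i = d j0 := by
    apply Finset.sum_eq_single_of_mem
    · simp
    · intro i hi hine
      have : i < j0 := by simp at hi; omega
      simp [hd, cterm, hmin i this]
  have hp : (0:ℝ) < 2*(1/3:ℝ)^(j0+1) := by positivity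
  have habs_d : |d j0| = 2 * (1/3:ℝ)^(j0+1) := by
    rcases Bool.eq_false_or_eq_true (x j0) with hx | hx <;>
      rcases Bool.eq_false_or_eq_true (y j0) with hy | hy
    · exact absurd (hx.trans hy.symm) hj0
    · show |cterm x j0 - cterm y j0| = _
      rw [cterm, cterm, hx, hy]
      rw [if_pos rfl, if_neg (by simp)]
      rw [abs_of_nonneg (by nlinarith [pow_nonneg (by norm_num : (0:ℝ) ≤ 1/3) (j0+1)])]
      ring
    · show |cterm x j0 - cterm y j0| = _
      rw [cterm, cterm, hx, hy]
      rw [if_neg (by simp), if_pos rfl]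
      rw [abs_of_nonpos (by nlinarith [pow_nonneg (by norm_num : (0:ℝ) ≤ 1/3) (j0+1)])]
      ring
    · exact absurd (hx.trans hy.symm) hj0
  -- tail bound
  have htail_summable : Summable (fun i => d (i + (j0+1))) := hsum.comp_injective (fun a b => by omega)
  have htail : |∑' i, d (i + (j0+1))| ≤ (1/3:ℝ)^(j0+1) := by
    have h1 : |∑' i, d (i + (j0+1))| ≤ ∑' i, |d (i + (j0+1))| := by
      simpa using norm_tsum_le_tsum_norm (f := fun i => d (i + (j0+1))) (htail_summable.abs)
    have h2 : ∑' i : ℕ, |d (i + (j0+1))| ≤ ∑' i : ℕ, (2:ℝ) * (1/3)^(i + (j0+1) + 1) := by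
      apply Summable.tsum_le_tsum
      · intro i; exact abs_cterm_sub_le x y _
      · exact htail_summable.abs
      · exact (summable_bound.comp_injective (fun a b => by omega))
    have h3 : ∑' i : ℕ, (2:ℝ) * (1/3)^(i + (j0+1) + 1) = (1/3:ℝ)^(j0+1) := by
      have hg : ∑' i : ℕ, (1/3:ℝ)^i = (1 - 1/3)⁻¹ :=
        tsum_geometric_of_lt_one (by norm_num) (by norm_num)
      calc ∑' i : ℕ, (2:ℝ) * (1/3)^(i + (j0+1) + 1)
          = ∑' i : ℕ, ((2:ℝ) * (1/3)^(j0+2)) * (1/3)^i := by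
            congr 1; funext i; rw [pow_add, pow_add]; ring
        _ = ((2:ℝ) * (1/3)^(j0+2)) * ∑' i : ℕ, (1/3:ℝ)^i := by
            exact tsum_mul_left
        _ = (1/3:ℝ)^(j0+1) := by rw [hg]; rw [pow_succ]; ring
    linarith
  have hdiff : cmap x - cmap y = d j0 + ∑' i, d (i + (j0+1)) := by
    rw [cmap, cmap, ← Summable.tsum_sub (summable_cterm x) (summable_cterm y), ← hsplit, hfin]
  set t := ∑' i, d (i + (j0+1)) with ht
  have habs : |d j0| ≤ |d j0 + t| + |t| := by
    have h2 := abs_add_le (d j0 + t) (-t)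
    simpa using h2
  have hpow : (1/3:ℝ)^N ≤ (1/3:ℝ)^(j0+1) :=
    pow_le_pow_of_le_one (by norm_num) (by norm_num) (by omega)
  rw [hdiff] at h
  linarith

noncomputable def emb (f : ℕ → ℕ) : ℝ := cmap (bseq f)

lemma emb_agree (f g : ℕ → ℕ) (n : ℕ)
    (h : |emb f - emb g| < (1/3:ℝ)^(sfun f (n+1))) : ∀ i ≤ n, f i = g i := by
  have hb : ∀ j < sfun f (n+1), bseq f j = bseq g j := cmap_agree _ _ _ h
  have hs : ∀ m, m ≤ n+1 → sfun f m = sfun g m := by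
    intro m hm
    apply sfun_eq_of_bseq_agree
    intro j hj
    exact hb j (lt_of_lt_of_le hj ((sfun_mono f).monotone hm))
  intro i hi
  have h1 := hs i (by omega)
  have h2 := hs (i+1) (by omega)
  simp only [sfun] at h2
  omega

lemma emb_inj : Function.Injective emb := by
  intro f g hfg
  funext n
  exact emb_agree f g n (by rw [hfg, sub_self, abs_zero]; positivity) n le_rfl

lemma bound_of_hurewicz (F : Set (ℕ → ℕ)) (hH : HurewiczProp ↥(emb '' F)) :
    ∃ g : ℕ → ℕ, ∀ f ∈ F, ∀ᶠ n in atTop, f n ≤ g n := by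
  classical
  set X := emb '' F with hX
  have hfx : ∀ x : ↥X, ∃ f, f ∈ F ∧ emb f = (x : ℝ) := fun x => by
    obtain ⟨f, hf, he⟩ := x.2; exact ⟨f, hf, he⟩
  choose fx hfxF hfxe using hfx
  set U : ℕ → Set (Set ↥X) := fun n => Set.range (fun m : ℕ => {x : ↥X | fx x n ≤ m}) with hU
  have hcond : ∀ n, (∀ s ∈ U n, IsOpen s) ∧ ⋃₀ U n = Set.univ := by
    intro n
    constructor
    · rintro s ⟨m, rfl⟩
      rw [Metric.isOpen_iff]
      intro x hx
      refine ⟨(1/3)^(sfun (fx x) (n+1)), by positivity, ?_⟩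
      intro y hy
      simp only [Metric.mem_ball, Subtype.dist_eq] at hy
      have hclose : |emb (fx x) - emb (fx y)| < (1/3:ℝ)^(sfun (fx x) (n+1)) := by
        rw [hfxe, hfxe, abs_sub_comm]
        rwa [Real.dist_eq] at hy
      have hagree := emb_agree _ _ n hclose
      have : fx y n ≤ m := by rw [← hagree n le_rfl]; exact hx
      exact this
    · ext x
      simp only [mem_sUnion, mem_univ, iff_true]
      exact ⟨{x' : ↥X | fx x' n ≤ fx x n}, ⟨fx x n, rfl⟩, by simp⟩
  obtain ⟨Fam, hFam, hev⟩ := hH U hcond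
  have hgn : ∀ n, ∃ gn : ℕ, ∀ x : ↥X, x ∈ ⋃₀ Fam n → fx x n ≤ gn := by
    intro n
    obtain ⟨hsub, hfin⟩ := hFam n
    set A : Set ℕ := (fun u : Set ↥X => sInf {m : ℕ | u = {x : ↥X | fx x n ≤ m}}) '' (Fam n)
      with hA
    have hAfin : A.Finite := hfin.image _
    refine ⟨sSup A, ?_⟩
    rintro x ⟨u, hu, hxu⟩
    obtain ⟨m, hm⟩ := hsub hu
    have hne : {m : ℕ | u = {x : ↥X | fx x n ≤ m}}.Nonempty := ⟨m, hm.symm⟩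
    have hmem := Nat.sInf_mem hne
    rw [mem_setOf_eq] at hmem
    rw [hmem] at hxu
    exact le_trans hxu (le_csSup hAfin.bddAbove ⟨u, hu, rfl⟩)
  choose g hg using hgn
  refine ⟨g, ?_⟩
  intro f hf
  set x : ↥X := ⟨emb f, ⟨f, hf, rfl⟩⟩ with hx'
  have hfxx : fx x = f := emb_inj (by rw [hfxe])
  filter_upwards [hev x] with n hn
  have := hg n x hn
  rwa [hfxx] at this

lemma exists_unbounded_family : ∃ F : Set (ℕ → ℕ), #F = boundingNumber ∧
    ∀ g : ℕ → ℕ, ∃ f ∈ F, ¬ ∀ᶠ n in atTop, f n ≤ g n := by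
  have hne : {c : Cardinal | ∃ F : Set (ℕ → ℕ), #F = c ∧
      ∀ g : ℕ → ℕ, ∃ f ∈ F, ¬ ∀ᶠ n in atTop, f n ≤ g n}.Nonempty := by
    refine ⟨#(Set.univ : Set (ℕ → ℕ)), Set.univ, rfl, ?_⟩
    intro g
    refine ⟨fun n => g n + 1, mem_univ _, ?_⟩
    intro hev
    obtain ⟨n, hn⟩ := hev.exists
    simp at hn
  exact csInf_mem hne

lemma hurewicz_of_lt_bounding (X : Set ℝ) (hX : #X < boundingNumber) : HurewiczProp ↥X := by
  classical
  intro U hU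
  rcases isEmpty_or_nonempty ↥X with hempty | hne
  · exact ⟨fun _ => ∅, fun n => ⟨empty_subset _, finite_empty⟩,
      fun x => (hempty.false x).elim⟩
  · have hcc : ∀ n, ∃ e : ℕ → Set ↥X, (∀ m, e m ∈ U n) ∧ ∀ x : ↥X, ∃ m, x ∈ e m := by
      intro n
      obtain ⟨hop, hcov⟩ := hU n
      obtain ⟨T, hTc, hTU⟩ := TopologicalSpace.isOpen_iUnion_countable
        (fun u : U n => (u : Set ↥X)) (fun u => hop u u.2)
      have huniv : ⋃ u ∈ T, (u : Set ↥X) = Set.univ := by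
        rw [hTU, ← hcov]
        ext x
        simp only [mem_iUnion, mem_sUnion]
        exact ⟨fun ⟨u, hu⟩ => ⟨u, u.2, hu⟩, fun ⟨u, hu, hxu⟩ => ⟨⟨u, hu⟩, hxu⟩⟩
      have hTne : T.Nonempty := by
        obtain ⟨x⟩ := hne
        have hx : x ∈ ⋃ u ∈ T, (u : Set ↥X) := by rw [huniv]; trivial
        obtain ⟨u, hu, -⟩ := mem_iUnion₂.mp hx
        exact ⟨u, hu⟩
      obtain ⟨e0, he0⟩ := hTc.exists_eq_range hTne
      refine ⟨fun m => (e0 m : Set ↥X), fun m => (e0 m).2, ?_⟩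
      intro x
      have hx : x ∈ ⋃ u ∈ T, (u : Set ↥X) := by rw [huniv]; trivial
      obtain ⟨u, hu, hxu⟩ := mem_iUnion₂.mp hx
      have hu' : u ∈ range e0 := by rw [← he0]; exact hu
      obtain ⟨m, rfl⟩ := hu'
      exact ⟨m, hxu⟩
    choose e heU hecov using hcc
    set φ : ↥X → ℕ → ℕ := fun x n => Nat.find (hecov n x) with hφ
    have hcard : #(range φ) < boundingNumber := lt_of_le_of_lt Cardinal.mk_range_le hX
    have hnotin : ∃ g : ℕ → ℕ, ∀ f ∈ range φ, ∀ᶠ n in atTop, f n ≤ g n := by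
      by_contra hc
      push_neg at hc
      have hmem : #(range φ) ∈ {c : Cardinal | ∃ F : Set (ℕ → ℕ), #F = c ∧
          ∀ g : ℕ → ℕ, ∃ f ∈ F, ¬ ∀ᶠ n in atTop, f n ≤ g n} := ⟨range φ, rfl, fun g => by simpa only [Filter.not_eventually, not_le] using hc g⟩
      exact absurd (csInf_le' hmem) (not_le.mpr hcard)
    obtain ⟨g, hg⟩ := hnotin
    refine ⟨fun n => e n '' {m | m ≤ g n}, fun n => ⟨?_, (Set.finite_Iic (g n)).image _⟩, ?_⟩
    · rintro u ⟨m, hm, rfl⟩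
      exact heU n m
    · intro x
      filter_upwards [hg (φ x) ⟨x, rfl⟩] with n hn
      exact ⟨e n (φ x n), ⟨φ x n, hn, rfl⟩, Nat.find_spec (hecov n x)⟩

/-- `non(Ufin(O,Γ)) = b`. -/
theorem non_hurewicz_eq_boundingNumber :
    (∀ X : Set ℝ, #X < boundingNumber → HurewiczProp ↥X) ∧
      (∃ X : Set ℝ, #X = boundingNumber ∧ ¬ HurewiczProp ↥X) := by
  constructor
  · exact fun X hX => hurewicz_of_lt_bounding X hX
  · obtain ⟨F, hFc, hFu⟩ := exists_unbounded_family
    refine ⟨emb '' F, ?_, ?_⟩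
    · rw [Cardinal.mk_image_eq emb_inj, hFc]
    · intro hH
      obtain ⟨g, hg⟩ := bound_of_hurewicz F hH
      obtain ⟨f, hf, hnb⟩ := hFu g
      exact hnb (hg f hf)
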